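/- Let X and Y be nonempty compact convex subsets of Hausdorff real topological vector spaces and g : X×Y→ℝ continuous. Then the zero-sum game (X,Y,g) is feasible if and only if it has a saddle point (equivalently, its value exists and is achieved by optimal strategies). -/

import Mathlib

/-- A two-player game over strategy sets `X ⊆ E`, `Y ⊆ F` with payoffs `U, V` is
feasible: for every pair of outside options admitting a feasible contract, there
exists a constrained Nash equilibrium. -/
def FeasibleOn {E F : Type*} (X : Set E) (Y : Set F) (U V : E → F → ℝ) : Prop :=
  ∀ u0 v0 : ℝ, (∃ x ∈ X, ∃ y ∈ Y, u0 ≤ U x y ∧ v0 ≤ V x y) →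
    ∃ x' ∈ X, ∃ y' ∈ Y, u0 ≤ U x' y' ∧ v0 ≤ V x' y' ∧
      (∀ x ∈ X, U x' y' < U x y' → V x y' < v0) ∧
      (∀ y ∈ Y, V x' y' < V x' y → U x' y < u0)


open Set Filter

/-- The parametrized minimum function `x ↦ min_{y ∈ Y} g x y` exists, is continuous on `X`,
is attained, and is a lower bound. -/
lemma exists_minFun {E F : Type*} [TopologicalSpace E] [TopologicalSpace F]
    {X : Set E} {Y : Set F} (hY : IsCompact Y) (hYne : Y.Nonempty)
    {g : E → F → ℝ} (hg : ContinuousOn (fun p : E × F => g p.1 p.2) (X ×ˢ Y)) :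
    ∃ m : E → ℝ, ContinuousOn m X ∧
      ∀ x ∈ X, ∃ y ∈ Y, g x y = m x ∧ ∀ z ∈ Y, m x ≤ g x z := by
  have hslice : ∀ x ∈ X, ContinuousOn (fun y => g x y) Y := by
    intro x hx
    have : ContinuousOn ((fun p : E × F => g p.1 p.2) ∘ (fun y => (x, y))) Y :=
      hg.comp (Continuous.continuousOn (by continuity)) (fun y hy => ⟨hx, hy⟩)
    exact this
  have hmin : ∀ x ∈ X, ∃ y ∈ Y, (∀ z ∈ Y, g x y ≤ g x z) ∧
      sInf (g x '' Y) = g x y := by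
    intro x hx
    obtain ⟨y, hy, hymin⟩ := hY.exists_isMinOn hYne (hslice x hx)
    refine ⟨y, hy, fun z hz => hymin hz, ?_⟩
    exact IsLeast.csInf_eq ⟨Set.mem_image_of_mem _ hy, fun b ⟨z, hz, hbz⟩ => hbz ▸ hymin hz⟩
  refine ⟨fun x => sInf (g x '' Y), ?_, ?_⟩
  · intro x₀ hx₀
    rw [ContinuousWithinAt, Metric.tendsto_nhds]
    intro ε hε
    obtain ⟨y₀, hy₀, hy₀min, hx₀eq⟩ := hmin x₀ hx₀
    -- upper part
    have husc : ∀ᶠ x in nhdsWithin x₀ X, g x y₀ < sInf (g x₀ '' Y) + ε := by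
      have hcx : ContinuousWithinAt (fun x => g x y₀) X x₀ := by
        have : ContinuousOn ((fun p : E × F => g p.1 p.2) ∘ (fun x => (x, y₀))) X :=
          hg.comp (Continuous.continuousOn (by continuity)) (fun x hx => ⟨hx, hy₀⟩)
        exact this x₀ hx₀
      have : sInf (g x₀ '' Y) + ε ∈ Set.Ioi (g x₀ y₀) := by
        rw [hx₀eq]; simp [hε]
      exact hcx (Iio_mem_nhds (by rw [hx₀eq]; linarith))
    -- lower part (tube lemma)
    have hlsc : ∀ᶠ x in nhdsWithin x₀ X, ∀ y ∈ Y, sInf (g x₀ '' Y) - ε / 2 < g x y := by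
      have hcov : ∀ y ∈ Y, ∃ O : Set F, IsOpen O ∧ y ∈ O ∧
          ∃ S ∈ nhdsWithin x₀ X, ∀ x ∈ S, ∀ z ∈ O ∩ Y, sInf (g x₀ '' Y) - ε / 2 < g x z := by
        intro y hy
        have hc : ContinuousWithinAt (fun p : E × F => g p.1 p.2) (X ×ˢ Y) (x₀, y) :=
          hg _ ⟨hx₀, hy⟩
        have hlt : sInf (g x₀ '' Y) - ε / 2 < g x₀ y := by
          have := hx₀eq ▸ hy₀min y hy
          linarith
        have hev : ∀ᶠ p in nhdsWithin (x₀, y) (X ×ˢ Y),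
            sInf (g x₀ '' Y) - ε / 2 < g p.1 p.2 := hc (Ioi_mem_nhds hlt)
        rw [nhdsWithin_prod_eq] at hev
        rw [Filter.eventually_iff, Filter.mem_prod_iff] at hev
        obtain ⟨S, hS, T, hT, hST⟩ := hev
        obtain ⟨O, hOopen, hyO, hOT⟩ := mem_nhdsWithin.mp hT
        refine ⟨O, hOopen, hyO, S, hS, fun x hx z hz => ?_⟩
        exact hST (Set.mk_mem_prod hx (hOT ⟨hz.1, hz.2⟩))
      choose O hOopen hOy S hS hI using hcov
      obtain ⟨t, ht⟩ := hY.elim_nhds_subcover' O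
        (fun y hy => (hOopen y hy).mem_nhds (hOy y hy))
      have hSmem : (⋂ y ∈ t, S y y.2) ∈ nhdsWithin x₀ X :=
        (Filter.biInter_mem t.finite_toSet).mpr (fun y _ => hS y y.2)
      filter_upwards [hSmem] with x hx y hy
      obtain ⟨yi, hyi, hyO⟩ := Set.mem_iUnion₂.mp (ht hy)
      exact hI yi yi.2 x (Set.mem_iInter₂.mp hx yi hyi) y ⟨hyO, hy⟩
    filter_upwards [husc, hlsc, self_mem_nhdsWithin] with x hx1 hx2 hxX
    rw [Real.dist_eq, abs_lt]
    obtain ⟨y, hy, hymin, hxeq⟩ := hmin x hxX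
    constructor
    · have h1 := hx2 y hy
      rw [hxeq]; linarith
    · have : sInf (g x '' Y) ≤ g x y₀ := hxeq ▸ hymin y₀ hy₀
      linarith
  · intro x hx
    obtain ⟨y, hy, hymin, hxeq⟩ := hmin x hx
    exact ⟨y, hy, hxeq.symm, fun z hz => le_of_eq_of_le hxeq (hymin z hz)⟩

/-- Intermediate value theorem on a convex set. -/
lemma ivt_convex {E : Type*} [AddCommGroup E] [Module ℝ E] [TopologicalSpace E]
    [IsTopologicalAddGroup E] [ContinuousSMul ℝ E]
    {X : Set E} (hX : Convex ℝ X) {f : E → ℝ} (hf : ContinuousOn f X)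
    {a b : E} (ha : a ∈ X) (hb : b ∈ X) {c : ℝ} (h1 : f a ≤ c) (h2 : c ≤ f b) :
    ∃ x ∈ X, f x = c := by
  set γ : ℝ → E := fun t => (1 - t) • a + t • b with hγdef
  have hmaps : Set.MapsTo γ (Set.Icc (0:ℝ) 1) X := fun t ht =>
    hX ha hb (by linarith [ht.2]) ht.1 (by ring)
  have hγ : Continuous γ := by
    apply Continuous.add
    · exact (continuous_const.sub continuous_id).smul continuous_const
    · exact continuous_id.smul continuous_const
  have hF : ContinuousOn (f ∘ γ) (Set.Icc (0:ℝ) 1) :=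
    hf.comp hγ.continuousOn hmaps
  have h0 : (f ∘ γ) 0 = f a := by simp [hγdef]
  have h1' : (f ∘ γ) 1 = f b := by simp [hγdef]
  have hc : c ∈ Set.Icc ((f ∘ γ) 0) ((f ∘ γ) 1) := by
    rw [h0, h1']; exact ⟨h1, h2⟩
  obtain ⟨t, ht, hft⟩ := intermediate_value_Icc (zero_le_one) hF hc
  exact ⟨γ t, hmaps ht, hft⟩

/-- A zero-sum game over nonempty compact convex subsets of Hausdorff real
topological vector spaces, with continuous payoff, is feasible if and only if it
has a saddle point (its value exists and is achieved by optimal strategies). -/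
theorem zero_sum_feasible_iff_saddle
    {E F : Type*}
    [AddCommGroup E] [Module ℝ E] [TopologicalSpace E]
    [IsTopologicalAddGroup E] [ContinuousSMul ℝ E] [T2Space E]
    [AddCommGroup F] [Module ℝ F] [TopologicalSpace F]
    [IsTopologicalAddGroup F] [ContinuousSMul ℝ F] [T2Space F]
    (X : Set E) (Y : Set F) (hXne : X.Nonempty) (hYne : Y.Nonempty)
    (hXcomp : IsCompact X) (hYcomp : IsCompact Y)
    (hXconv : Convex ℝ X) (hYconv : Convex ℝ Y)
    (g : E → F → ℝ)
    (hg : ContinuousOn (fun p : E × F => g p.1 p.2) (X ×ˢ Y)) :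
    FeasibleOn X Y g (fun x y => -g x y) ↔
      ∃ xs ∈ X, ∃ ys ∈ Y,
        (∀ x ∈ X, g x ys ≤ g xs ys) ∧ (∀ y ∈ Y, g xs ys ≤ g xs y) := by
  -- slice continuity
  have hslice1 : ∀ y ∈ Y, ContinuousOn (fun x => g x y) X := by
    intro y hy
    have : ContinuousOn ((fun p : E × F => g p.1 p.2) ∘ (fun x => (x, y))) X :=
      hg.comp (Continuous.continuousOn (by continuity)) (fun x hx => ⟨hx, hy⟩)
    exact this
  have hslice2 : ∀ x ∈ X, ContinuousOn (fun y => g x y) Y := by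
    intro x hx
    have : ContinuousOn ((fun p : E × F => g p.1 p.2) ∘ (fun y => (x, y))) Y :=
      hg.comp (Continuous.continuousOn (by continuity)) (fun y hy => ⟨hx, hy⟩)
    exact this
  -- the min-function m and max-function M
  obtain ⟨m, hmcont, hm⟩ := exists_minFun hYcomp hYne hg
  have hgswap : ContinuousOn (fun p : F × E => -g p.2 p.1) (Y ×ˢ X) := by
    have : ContinuousOn ((fun p : E × F => g p.1 p.2) ∘ Prod.swap) (Y ×ˢ X) :=
      hg.comp continuous_swap.continuousOn (fun p hp => ⟨hp.2, hp.1⟩)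
    exact this.neg
  obtain ⟨mh, hmhcont, hmh⟩ := exists_minFun (g := fun y x => -g x y) hXcomp hXne hgswap
  obtain ⟨M, hMcont, hM⟩ : ∃ M : F → ℝ, ContinuousOn M Y ∧
      ∀ y ∈ Y, ∃ x ∈ X, g x y = M y ∧ ∀ z ∈ X, g z y ≤ M y := by
    refine ⟨fun y => -(mh y), hmhcont.neg, fun y hy => ?_⟩
    obtain ⟨x, hx, heq, hb⟩ := hmh y hy
    have heq' : -g x y = mh y := heq
    refine ⟨x, hx, by simp only; linarith, fun z hz => ?_⟩
    have := hb z hz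
    simp only at this ⊢
    linarith
  constructor
  · -- feasible → saddle
    intro hfeas
    obtain ⟨xs, hxs, hxsmax⟩ := hXcomp.exists_isMaxOn hXne hmcont
    obtain ⟨ys, hys, hysmin⟩ := hYcomp.exists_isMinOn hYne hMcont
    have hαb : ∀ x ∈ X, m x ≤ (m xs) := fun x hx => hxsmax hx
    have hβb : ∀ y ∈ Y, (M ys) ≤ M y := fun y hy => hysmin hy
    have hfc : (m xs) ≤ g xs ys ∧ g xs ys ≤ (M ys) := by
      obtain ⟨_, _, _, hb1⟩ := hm xs hxs
      obtain ⟨_, _, _, hb2⟩ := hM ys hys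
      exact ⟨hb1 ys hys, hb2 xs hxs⟩
    obtain ⟨x', hx', y', hy', h1, h2, hc1, hc2⟩ :=
      hfeas (m xs) (-(M ys)) ⟨xs, hxs, ys, hys, hfc.1, show -(M ys) ≤ -g xs ys by linarith [hfc.2]⟩
    have h2' : -(M ys) ≤ -g x' y' := h2
    have hc1' : ∀ x ∈ X, g x' y' < g x y' → -g x y' < -(M ys) := hc1
    have hc2' : ∀ y ∈ Y, -g x' y' < -g x' y → g x' y < (m xs) := hc2
    -- g x' y' ≥ (M ys)
    have hge : (M ys) ≤ g x' y' := by
      by_contra h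
      push_neg at h
      obtain ⟨xh, hxh, hxheq, _⟩ := hM y' hy'
      have hxhval : (M ys) ≤ g xh y' := by rw [hxheq]; exact hβb y' hy'
      obtain ⟨x'', hx'', hx''eq⟩ := ivt_convex hXconv (hslice1 y' hy') hx' hxh
        (c := (g x' y' + (M ys)) / 2)
        (show g x' y' ≤ (g x' y' + (M ys)) / 2 by linarith)
        (show (g x' y' + (M ys)) / 2 ≤ g xh y' by linarith)
      have hxv : g x'' y' = (g x' y' + (M ys)) / 2 := hx''eq
      have := hc1' x'' hx'' (by linarith)
      linarith
    -- g x' y' ≤ (m xs)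
    have hle : g x' y' ≤ (m xs) := by
      by_contra h
      push_neg at h
      obtain ⟨yh, hyh, hyheq, _⟩ := hm x' hx'
      have hyhval : g x' yh ≤ (m xs) := le_trans (le_of_eq hyheq) (hαb x' hx')
      obtain ⟨y'', hy'', hy''eq⟩ := ivt_convex hYconv (hslice2 x' hx') hyh hy'
        (c := ((m xs) + g x' y') / 2)
        (show g x' yh ≤ ((m xs) + g x' y') / 2 by linarith)
        (show ((m xs) + g x' y') / 2 ≤ g x' y' by linarith)
      have hyv : g x' y'' = ((m xs) + g x' y') / 2 := hy''eq
      have := hc2' y'' hy'' (by linarith)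
      linarith
    have hβα : (M ys) ≤ (m xs) := le_trans hge hle
    refine ⟨xs, hxs, ys, hys, ?_, ?_⟩
    · intro x hx
      obtain ⟨_, _, _, hb2⟩ := hM ys hys
      obtain ⟨_, _, _, hb1⟩ := hm xs hxs
      calc g x ys ≤ (M ys) := hb2 x hx
        _ ≤ (m xs) := hβα
        _ ≤ g xs ys := hb1 ys hys
    · intro y hy
      obtain ⟨_, _, _, hb2⟩ := hM ys hys
      obtain ⟨_, _, _, hb1⟩ := hm xs hxs
      calc g xs ys ≤ (M ys) := hb2 xs hxs
        _ ≤ (m xs) := hβα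
        _ ≤ g xs y := hb1 y hy
  · -- saddle → feasible
    rintro ⟨xs, hxs, ys, hys, hsx, hsy⟩
    intro u0 v0 ⟨x0, hx0, y0, hy0, hu, hv⟩
    have hv' : v0 ≤ -g x0 y0 := hv
    set w := g xs ys with hw
    by_cases h1 : -v0 < w
    · -- find x' with m x' = -v0, y' the min response
      have hmx0 : m x0 ≤ -v0 := by
        obtain ⟨_, _, _, hb⟩ := hm x0 hx0
        linarith [hb y0 hy0]
      have hmxs : -v0 ≤ m xs := by
        obtain ⟨y, hy, heq, _⟩ := hm xs hxs
        linarith [hsy y hy, heq]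
      obtain ⟨x', hx', hmx'⟩ := ivt_convex hXconv hmcont hx0 hxs hmx0 hmxs
      obtain ⟨y', hy', hgy', hbound⟩ := hm x' hx'
      refine ⟨x', hx', y', hy', by linarith,
        show v0 ≤ -g x' y' by linarith, ?_, ?_⟩
      · intro x hx hlt
        show -g x y' < v0
        linarith
      · intro y hy hlt
        have hlt' : -g x' y' < -g x' y := hlt
        linarith [hbound y hy]
    · by_cases h2 : w < u0
      · have hMys : M ys ≤ u0 := by
          obtain ⟨x, hx, heq, _⟩ := hM ys hys
          linarith [hsx x hx]
        have hMy0 : u0 ≤ M y0 := by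
          obtain ⟨_, _, _, hb⟩ := hM y0 hy0
          linarith [hb x0 hx0]
        obtain ⟨y', hy', hMy'⟩ := ivt_convex hYconv hMcont hys hy0 hMys hMy0
        obtain ⟨x', hx', hgx', hbound⟩ := hM y' hy'
        refine ⟨x', hx', y', hy', by linarith,
          show v0 ≤ -g x' y' by linarith, ?_, ?_⟩
        · intro x hx hlt
          show -g x y' < v0
          linarith [hbound x hx]
        · intro y hy hlt
          have hlt' : -g x' y' < -g x' y := hlt
          linarith
      · push_neg at h1 h2
        refine ⟨xs, hxs, ys, hys, h2, show v0 ≤ -g xs ys by linarith, ?_, ?_⟩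
        · intro x hx hlt
          show -g x ys < v0
          linarith [hsx x hx]
        · intro y hy hlt
          have hlt' : -g xs ys < -g xs y := hlt
          linarith [hsy y hy]
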